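/- Let G, G₁, G₂ be simple mixed graphs on the same vertex set Fin n (n ≥ 1) such that G = G₁ ⊕ G₂ is a factorization, i.e., E = E₁ + E₂ and A = A₁ + A₂ pointwise. Then (i) ν_{2n−1}(G) ≥ ν_{2n−1}(G₁) + ν_{2n−1}(G₂), and (ii) max{ν₁(G₁), ν₁(G₂)} ≤ ν₁(G) ≤ ν₁(G₁) + ν₁(G₂). -/

import Mathlib

set_option linter.unusedSectionVars false

open Matrix Finset Polynomial

variable {V : Type*} [Fintype V] [DecidableEq V]

/-- Undirected adjacency matrix of the mixed graph with edge-multiplicity function `E`: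
`(u,v)`-entry `E u v` for `u ≠ v`, and `(v,v)`-entry `2 * E v v`. -/
def Au (E : V → V → ℕ) : Matrix V V ℝ :=
  Matrix.of fun u v => if u = v then ((2 * E v v : ℕ) : ℝ) else ((E u v : ℕ) : ℝ)

/-- Arc matrix of the mixed graph with arc-multiplicity function `A`. -/
def Bm (A : V → V → ℕ) : Matrix V V ℝ := Matrix.of fun u v => ((A u v : ℕ) : ℝ)

/-- Undirected degree `d v`. -/
def dU (E : V → V → ℕ) (v : V) : ℕ :=
  (∑ u ∈ Finset.univ.filter (fun u => u ≠ v), E v u) + 2 * E v v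

/-- Out-degree `d⁺ v`. -/
def dOut (A : V → V → ℕ) (v : V) : ℕ := ∑ u, A v u

/-- In-degree `d⁻ v`. -/
def dIn (A : V → V → ℕ) (v : V) : ℕ := ∑ u, A u v

/-- Integrated adjacency matrix `𝓘(G) = [[Aᵤ, B], [Bᵀ, Aᵤ]]`. -/
def intAdj (E A : V → V → ℕ) : Matrix (V ⊕ V) (V ⊕ V) ℝ :=
  Matrix.fromBlocks (Au E) (Bm A) (Bm A)ᵀ (Au E)

/-- Integrated degree matrix `𝓘ᴰ(G)`. -/
def intDeg (E A : V → V → ℕ) : Matrix (V ⊕ V) (V ⊕ V) ℝ :=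
  Matrix.diagonal (Sum.elim (fun v => ((dU E v + dOut A v : ℕ) : ℝ))
    (fun v => ((dU E v + dIn A v : ℕ) : ℝ)))

/-- Integrated Laplacian matrix `𝓘ᴸ(G) = 𝓘ᴰ(G) - 𝓘(G)`. -/
def intLap (E A : V → V → ℕ) : Matrix (V ⊕ V) (V ⊕ V) ℝ := intDeg E A - intAdj E A

/-- Integrated signless Laplacian matrix `𝓘Q(G) = 𝓘ᴰ(G) + 𝓘(G)`. -/
def intQ (E A : V → V → ℕ) : Matrix (V ⊕ V) (V ⊕ V) ℝ := intDeg E A + intAdj E A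

/-- A mixed graph is simple: multiplicities at most 1, no loops, no directed loops. -/
def IsSimple (E A : V → V → ℕ) : Prop :=
  (∀ u v, E u v ≤ 1) ∧ (∀ u v, A u v ≤ 1) ∧ (∀ v, E v v = 0) ∧ (∀ v, A v v = 0)

/-- Number of edges (excluding loops): `e(G) = (1/2)·Σ_{u ≠ v} E u v`. -/
noncomputable def numEdges (E : V → V → ℕ) : ℝ :=
  (∑ u, ∑ v ∈ Finset.univ.filter (fun v => v ≠ u), (E u v : ℝ)) / 2

/-- Number of loops: `l(G) = Σ_v E v v`. -/
noncomputable def numLoops (E : V → V → ℕ) : ℝ := ∑ v, (E v v : ℝ)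

/-- Number of arcs (including directed loops): `a(G) = Σ_{u,v} A u v`. -/
noncomputable def numArcs (A : V → V → ℕ) : ℝ := ∑ u, ∑ v, (A u v : ℝ)

lemma intAdj_isHermitian (E A : V → V → ℕ) (hE : ∀ u v, E u v = E v u) :
    (intAdj E A).IsHermitian := by
  have hAu : (Au E)ᵀ = Au E := by
    ext u v
    by_cases h : u = v
    · subst h; rfl
    · simp [Au, Matrix.transpose_apply, h, Ne.symm h, hE u v]
  show (intAdj E A)ᴴ = intAdj E A
  rw [Matrix.conjTranspose_eq_transpose_of_trivial]
  unfold intAdj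
  rw [Matrix.fromBlocks_transpose, hAu, Matrix.transpose_transpose]

lemma intLap_isHermitian (E A : V → V → ℕ) (hE : ∀ u v, E u v = E v u) :
    (intLap E A).IsHermitian :=
  (Matrix.isHermitian_diagonal _).sub (intAdj_isHermitian E A hE)

lemma intQ_isHermitian (E A : V → V → ℕ) (hE : ∀ u v, E u v = E v u) :
    (intQ E A).IsHermitian :=
  (Matrix.isHermitian_diagonal _).add (intAdj_isHermitian E A hE)

/-- The non-increasing rearrangement of a finite tuple of reals. -/
noncomputable def sortDesc {N : ℕ} (f : Fin N → ℝ) : Fin N → ℝ :=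
  fun i => (f ∘ Tuple.sort f) i.rev

/-- The eigenvalues of the integrated Laplacian matrix `𝓘ᴸ(G)`, in non-increasing order:
`nuT E A hE i` is `ν_{i+1}(G)` (0-indexed). -/
noncomputable def nuT {n : ℕ} (E A : Fin n → Fin n → ℕ) (hE : ∀ u v, E u v = E v u) :
    Fin (n + n) → ℝ :=
  sortDesc (fun i => (intLap_isHermitian E A hE).eigenvalues (finSumFinEquiv.symm i))

/-- The eigenvalues of the integrated signless Laplacian matrix `𝓘Q(G)`, in non-increasing
order: `xiT E A hE i` is `ξ_{i+1}(G)` (0-indexed). -/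
noncomputable def xiT {n : ℕ} (E A : Fin n → Fin n → ℕ) (hE : ∀ u v, E u v = E v u) :
    Fin (n + n) → ℝ :=
  sortDesc (fun i => (intQ_isHermitian E A hE).eigenvalues (finSumFinEquiv.symm i))

/-- The eigenvalues of the integrated adjacency matrix `𝓘(G)`, in non-increasing order:
`lamT E A hE i` is `λ_{i+1}(G)` (0-indexed). -/
noncomputable def lamT {n : ℕ} (E A : Fin n → Fin n → ℕ) (hE : ∀ u v, E u v = E v u) :
    Fin (n + n) → ℝ :=
  sortDesc (fun i => (intAdj_isHermitian E A hE).eigenvalues (finSumFinEquiv.symm i))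


section Ray
variable {W : Type*} [Fintype W] [DecidableEq W] {M : Matrix W W ℝ}

noncomputable def evec (hM : M.IsHermitian) (i : W) : W → ℝ := ⇑(hM.eigenvectorBasis i)

noncomputable def ecoeffs (hM : M.IsHermitian) (x : W → ℝ) (i : W) : ℝ := evec hM i ⬝ᵥ x

lemma ecoeffs_eq_starU (hM : M.IsHermitian) (x : W → ℝ) :
    ecoeffs hM x = (star (hM.eigenvectorUnitary : Matrix W W ℝ)) *ᵥ x := by
  funext i
  simp only [ecoeffs, evec, dotProduct, mulVec, dotProduct, Matrix.star_eq_conjTranspose,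
    Matrix.conjTranspose_eq_transpose_of_trivial, Matrix.transpose_apply,
    Matrix.IsHermitian.eigenvectorUnitary_apply]

lemma x_eq_U_ecoeffs (hM : M.IsHermitian) (x : W → ℝ) :
    x = (hM.eigenvectorUnitary : Matrix W W ℝ) *ᵥ (ecoeffs hM x) := by
  rw [ecoeffs_eq_starU, Matrix.mulVec_mulVec,
    (Matrix.mem_unitaryGroup_iff).mp (hM.eigenvectorUnitary).2, Matrix.one_mulVec]

lemma dot_self_expand (hM : M.IsHermitian) (x : W → ℝ) :
    x ⬝ᵥ x = ∑ i, (ecoeffs hM x i) ^ 2 := by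
  have : x ᵥ* (hM.eigenvectorUnitary : Matrix W W ℝ) = ecoeffs hM x := by
    rw [← Matrix.mulVec_transpose, ecoeffs_eq_starU, Matrix.star_eq_conjTranspose,
      Matrix.conjTranspose_eq_transpose_of_trivial]
  nth_rewrite 2 [x_eq_U_ecoeffs hM x]
  rw [Matrix.dotProduct_mulVec, this]
  simp [dotProduct, sq]

lemma dot_mulVec_expand (hM : M.IsHermitian) (x : W → ℝ) :
    x ⬝ᵥ (M *ᵥ x) = ∑ i, hM.eigenvalues i * (ecoeffs hM x i) ^ 2 := by
  have hUvm : x ᵥ* (hM.eigenvectorUnitary : Matrix W W ℝ) = ecoeffs hM x := by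
    rw [← Matrix.mulVec_transpose, ecoeffs_eq_starU, Matrix.star_eq_conjTranspose,
      Matrix.conjTranspose_eq_transpose_of_trivial]
  conv_lhs => rw [hM.spectral_theorem, Unitary.conjStarAlgAut_apply]
  rw [← Matrix.mulVec_mulVec, ← Matrix.mulVec_mulVec, Matrix.dotProduct_mulVec, hUvm,
    ← ecoeffs_eq_starU]
  have hdiag : (Matrix.diagonal (RCLike.ofReal ∘ hM.eigenvalues) : Matrix W W ℝ) *ᵥ
      (ecoeffs hM x) = fun i => hM.eigenvalues i * ecoeffs hM x i := by
    funext i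
    simp [Matrix.mulVec_diagonal]
  rw [hdiag]
  simp [dotProduct, sq]; ring_nf
  exact Finset.sum_congr rfl fun i _ => by ring

lemma ecoeffs_evec (hM : M.IsHermitian) (i j : W) :
    ecoeffs hM (evec hM j) i = if i = j then 1 else 0 := by
  have h : (star (hM.eigenvectorUnitary : Matrix W W ℝ)) *
      (hM.eigenvectorUnitary : Matrix W W ℝ) = 1 :=
    (Matrix.mem_unitaryGroup_iff').mp (hM.eigenvectorUnitary).2
  have := congrFun (congrFun h i) j
  simp only [Matrix.mul_apply, Matrix.conjTranspose_eq_transpose_of_trivial,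
    Matrix.transpose_apply, Matrix.IsHermitian.eigenvectorUnitary_apply,
    Matrix.one_apply] at this
  simpa [ecoeffs, evec, dotProduct] using this

end Ray

section SortFacts
variable {N : ℕ} (f : Fin N → ℝ)

lemma rev_zero' (hN : 0 < N) : (⟨0, hN⟩ : Fin N).rev = ⟨N - 1, by omega⟩ := by
  ext; simp [Fin.val_rev]

lemma rev_sub_two (hN : 2 ≤ N) : (⟨N - 2, by omega⟩ : Fin N).rev = ⟨1, by omega⟩ := by
  ext; simp [Fin.val_rev]; omega

lemma le_sortDesc_zero (hN : 0 < N) (i : Fin N) : f i ≤ sortDesc f ⟨0, hN⟩ := by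
  have hm := Tuple.monotone_sort f
  have h1 : f i = (f ∘ Tuple.sort f) ((Tuple.sort f)⁻¹ i) := by simp
  rw [h1, sortDesc, rev_zero' hN]
  refine hm ?_
  rw [Fin.le_def]
  have := ((Tuple.sort f)⁻¹ i).isLt
  simp only []
  omega

lemma sortDesc_zero_mem (hN : 0 < N) : ∃ i, sortDesc f ⟨0, hN⟩ = f i :=
  ⟨Tuple.sort f (⟨0, hN⟩ : Fin N).rev, rfl⟩

lemma sortDesc_penult_mem (hN : 2 ≤ N) : ∃ i, sortDesc f ⟨N - 2, by omega⟩ = f i :=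
  ⟨Tuple.sort f (⟨N - 2, by omega⟩ : Fin N).rev, rfl⟩

/-- second smallest is ≤ the larger of any two distinct entries -/
lemma sortDesc_penult_le_pair (hN : 2 ≤ N) {i j : Fin N} (hij : i ≠ j) :
    sortDesc f ⟨N - 2, by omega⟩ ≤ max (f i) (f j) := by
  have hm := Tuple.monotone_sort f
  set σ := Tuple.sort f
  have hd : σ⁻¹ i ≠ σ⁻¹ j := fun h => hij (by simpa using congrArg σ h)
  rw [sortDesc, rev_sub_two hN]
  rcases le_or_gt (⟨1, by omega⟩ : Fin N) (σ⁻¹ i) with h | h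
  · refine le_max_of_le_left ?_
    have : f i = (f ∘ σ) (σ⁻¹ i) := by simp [σ]
    rw [this]; exact hm h
  · refine le_max_of_le_right ?_
    have h1 : (⟨1, by omega⟩ : Fin N) ≤ σ⁻¹ j := by
      rw [Fin.le_def]; rw [Fin.lt_def] at h
      have := Fin.val_ne_of_ne hd
      change _ < 1 at h; change 1 ≤ _; omega
    have : f j = (f ∘ σ) (σ⁻¹ j) := by simp [σ]
    rw [this]; exact hm h1

lemma sortDesc_penult_le_of_min (hN : 2 ≤ N) {i0 : Fin N} (hmin : ∀ j, f i0 ≤ f j)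
    {j : Fin N} (hj : j ≠ i0) : sortDesc f ⟨N - 2, by omega⟩ ≤ f j := by
  have hm := Tuple.monotone_sort f
  set σ := Tuple.sort f
  rw [sortDesc, rev_sub_two hN]
  rcases le_or_gt (⟨1, by omega⟩ : Fin N) (σ⁻¹ j) with h | h
  · have : f j = (f ∘ σ) (σ⁻¹ j) := by simp [σ]
    rw [this]; exact hm h
  · -- σ⁻¹ j = 0, so f j = smallest; then f i0 ≤ f j forces things
    have hj0 : σ⁻¹ j = ⟨0, by omega⟩ := by
      rw [Fin.lt_def] at h; ext; simpa using Nat.lt_one_iff.mp (by simpa using h)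
    have hi0 : (⟨1, by omega⟩ : Fin N) ≤ σ⁻¹ i0 := by
      have hd : σ⁻¹ i0 ≠ σ⁻¹ j := by
        intro hh
        have : i0 = j := by simpa using congrArg σ hh
        exact hj this.symm
      rw [Fin.le_def]
      have := Fin.val_ne_of_ne hd
      rw [hj0] at this; simp at this ⊢; omega
    have h1 : (f ∘ σ) (⟨1, by omega⟩ : Fin N) ≤ (f ∘ σ) (σ⁻¹ i0) := hm hi0
    have h2 : (f ∘ σ) (σ⁻¹ i0) = f i0 := by simp [σ]
    have h3 : f i0 ≤ f j := hmin j
    calc (f ∘ σ) (⟨1, by omega⟩ : Fin N) ≤ f i0 := by rw [← h2]; exact h1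
      _ ≤ f j := h3

lemma exists_ne_le_sortDesc_penult (hN : 2 ≤ N) (i0 : Fin N) :
    ∃ j, j ≠ i0 ∧ f j ≤ sortDesc f ⟨N - 2, by omega⟩ := by
  have hm := Tuple.monotone_sort f
  set σ := Tuple.sort f
  rw [sortDesc, rev_sub_two hN]
  by_cases h : σ (⟨1, by omega⟩ : Fin N) = i0
  · refine ⟨σ (⟨0, by omega⟩ : Fin N), ?_, ?_⟩
    · intro hh
      have : (⟨0, by omega⟩ : Fin N) = (⟨1, by omega⟩ : Fin N) := σ.injective (hh.trans h.symm)
      simp at this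
    · refine hm ?_
      rw [Fin.le_def]
      simp
  · exact ⟨σ (⟨1, by omega⟩ : Fin N), h, le_refl _⟩

end SortFacts

section Quad
variable {W : Type*} [Fintype W] [DecidableEq W]

lemma quad_nonneg_of_lap (L : Matrix W W ℝ) (hsym : ∀ i j, L i j = L j i)
    (hoff : ∀ i j, i ≠ j → L i j ≤ 0) (hrow : ∀ i, ∑ j, L i j = 0) (x : W → ℝ) :
    0 ≤ x ⬝ᵥ (L *ᵥ x) := by
  have h1 : ∑ i, ∑ j, (-(L i j)) * (x i - x j) ^ 2
      = (∑ i, ∑ j, (-(L i j)) * x i ^ 2) + ((∑ i, ∑ j, (-(L i j)) * x j ^ 2)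
        + ∑ i, ∑ j, 2 * (L i j * (x i * x j))) := by
    simp_rw [← Finset.sum_add_distrib]
    exact Finset.sum_congr rfl fun i _ => Finset.sum_congr rfl fun j _ => by ring
  have h2 : ∑ i, ∑ j, (-(L i j)) * x i ^ 2 = 0 := by
    refine Finset.sum_eq_zero fun i _ => ?_
    rw [← Finset.sum_mul, Finset.sum_neg_distrib, hrow i, neg_zero, zero_mul]
  have h3 : ∑ i, ∑ j, (-(L i j)) * x j ^ 2 = 0 := by
    rw [Finset.sum_comm]
    refine Finset.sum_eq_zero fun j _ => ?_
    have : ∀ i, -(L i j) = -(L j i) := fun i => by rw [hsym]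
    simp_rw [this]
    rw [← Finset.sum_mul, Finset.sum_neg_distrib, hrow j, neg_zero, zero_mul]
  have h4 : ∑ i, ∑ j, 2 * (L i j * (x i * x j)) = 2 * (x ⬝ᵥ (L *ᵥ x)) := by
    simp only [dotProduct, mulVec, dotProduct, Finset.mul_sum]
    exact Finset.sum_congr rfl fun i _ => Finset.sum_congr rfl fun j _ => by ring
  have h5 : 0 ≤ ∑ i, ∑ j, (-(L i j)) * (x i - x j) ^ 2 := by
    refine Finset.sum_nonneg fun i _ => Finset.sum_nonneg fun j _ => ?_
    by_cases hij : i = j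
    · subst hij; simp
    · exact mul_nonneg (by linarith [hoff i j hij]) (sq_nonneg _)
  rw [h1, h2, h3, h4, zero_add, zero_add] at h5
  linarith

variable {M : Matrix W W ℝ}

lemma evec_quad (hM : M.IsHermitian) (i : W) :
    evec hM i ⬝ᵥ (M *ᵥ evec hM i) = hM.eigenvalues i := by
  have h := hM.mulVec_eigenvectorBasis i
  have h1 : M *ᵥ evec hM i = hM.eigenvalues i • evec hM i := h
  rw [h1, dotProduct_smul]
  have h2 : evec hM i ⬝ᵥ evec hM i = 1 := by
    have := ecoeffs_evec hM i i
    simpa [ecoeffs] using this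
  rw [smul_eq_mul, h2, mul_one]

lemma eigenvalues_nonneg_of_quad (hM : M.IsHermitian)
    (hq : ∀ x : W → ℝ, 0 ≤ x ⬝ᵥ (M *ᵥ x)) (i : W) : 0 ≤ hM.eigenvalues i := by
  rw [← evec_quad hM i]; exact hq _

lemma dot_pair_expand (hM : M.IsHermitian) (u x : W → ℝ) :
    u ⬝ᵥ x = ∑ i, ecoeffs hM u i * ecoeffs hM x i := by
  have hx : u = (hM.eigenvectorUnitary : Matrix W W ℝ) *ᵥ (ecoeffs hM u) := x_eq_U_ecoeffs hM u
  have hUvm : x ᵥ* (hM.eigenvectorUnitary : Matrix W W ℝ) = ecoeffs hM x := by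
    rw [← Matrix.mulVec_transpose, ecoeffs_eq_starU, Matrix.star_eq_conjTranspose,
      Matrix.conjTranspose_eq_transpose_of_trivial]
  calc u ⬝ᵥ x = x ⬝ᵥ u := dotProduct_comm _ _
    _ = x ⬝ᵥ ((hM.eigenvectorUnitary : Matrix W W ℝ) *ᵥ (ecoeffs hM u)) := by rw [← hx]
    _ = (x ᵥ* (hM.eigenvectorUnitary : Matrix W W ℝ)) ⬝ᵥ (ecoeffs hM u) :=
        Matrix.dotProduct_mulVec _ _ _
    _ = ecoeffs hM x ⬝ᵥ ecoeffs hM u := by rw [hUvm]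
    _ = ∑ i, ecoeffs hM u i * ecoeffs hM x i := by
        simp [dotProduct, mul_comm]

lemma quad_le_of_ub (hM : M.IsHermitian) {m : ℝ} (hub : ∀ i, hM.eigenvalues i ≤ m)
    (x : W → ℝ) : x ⬝ᵥ (M *ᵥ x) ≤ m * (x ⬝ᵥ x) := by
  rw [dot_mulVec_expand hM, dot_self_expand hM, Finset.mul_sum]
  exact Finset.sum_le_sum fun i _ => mul_le_mul_of_nonneg_right (hub i) (sq_nonneg _)

end Quad

section Var
variable {W : Type*} [Fintype W] [DecidableEq W] {M : Matrix W W ℝ}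

lemma evec_dotp (hM : M.IsHermitian) (i j : W) :
    evec hM i ⬝ᵥ evec hM j = if i = j then 1 else 0 := by
  have := ecoeffs_evec hM i j
  simpa [ecoeffs] using this

lemma evec_norm (hM : M.IsHermitian) (i : W) : evec hM i ⬝ᵥ evec hM i = 1 := by
  have := ecoeffs_evec hM i i
  simpa [ecoeffs] using this

lemma dot_evec (hM : M.IsHermitian) (u : W → ℝ) (i : W) :
    u ⬝ᵥ evec hM i = ecoeffs hM u i := by
  rw [ecoeffs, dotProduct_comm]

lemma kernel_ecoeffs (hM : M.IsHermitian) (hq : ∀ y : W → ℝ, 0 ≤ y ⬝ᵥ (M *ᵥ y))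
    {u : W → ℝ} (hu0 : u ≠ 0) (hu : M *ᵥ u = 0) :
    (∀ i, ecoeffs hM u i ≠ 0 → hM.eigenvalues i = 0) ∧ ∃ i0, ecoeffs hM u i0 ≠ 0 := by
  have hnn : ∀ i, 0 ≤ hM.eigenvalues i := eigenvalues_nonneg_of_quad hM hq
  have huq : ∑ i, hM.eigenvalues i * (ecoeffs hM u i) ^ 2 = 0 := by
    rw [← dot_mulVec_expand hM, hu, dotProduct_zero]
  constructor
  · intro i hi
    have hterm := (Finset.sum_eq_zero_iff_of_nonneg
      (fun i _ => mul_nonneg (hnn i) (sq_nonneg (ecoeffs hM u i)))).mp huq i (Finset.mem_univ i)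
    rcases mul_eq_zero.mp hterm with h | h
    · exact h
    · exact absurd (sq_eq_zero_iff.mp h) hi
  · by_contra hc
    push_neg at hc
    have h0 : u ⬝ᵥ u = 0 := by rw [dot_self_expand hM]; simp [hc]
    refine hu0 (funext fun w => ?_)
    have := (Finset.sum_eq_zero_iff_of_nonneg
      (fun i _ => mul_self_nonneg (u i))).mp h0 w (Finset.mem_univ w)
    simpa [mul_self_eq_zero] using this

lemma quad_ge_nu2 {N : ℕ} (hN : 2 ≤ N) (e : Fin N ≃ W) (hM : M.IsHermitian)
    (hq : ∀ y : W → ℝ, 0 ≤ y ⬝ᵥ (M *ᵥ y)) {u : W → ℝ} (hu0 : u ≠ 0) (hu : M *ᵥ u = 0)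
    {x : W → ℝ} (hox : u ⬝ᵥ x = 0) :
    sortDesc (fun k => hM.eigenvalues (e k)) ⟨N - 2, by omega⟩ * (x ⬝ᵥ x)
      ≤ x ⬝ᵥ (M *ᵥ x) := by
  have hnn : ∀ i, 0 ≤ hM.eigenvalues i := eigenvalues_nonneg_of_quad hM hq
  obtain ⟨hzero, i0, hi0⟩ := kernel_ecoeffs hM hq hu0 hu
  set f := fun k => hM.eigenvalues (e k) with hf
  set ν := sortDesc f ⟨N - 2, by omega⟩ with hν
  by_cases hone : ∀ j, j ≠ i0 → ecoeffs hM u j = 0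
  · -- unique nonzero coefficient
    have hmin : ∀ k, f (e.symm i0) ≤ f k := by
      intro k
      have h0 : hM.eigenvalues i0 = 0 := hzero i0 hi0
      simp only [hf, Equiv.apply_symm_apply, h0]
      exact hnn _
    have hP2 : ∀ i, i ≠ i0 → ν ≤ hM.eigenvalues i := by
      intro i hi
      have hne : e.symm i ≠ e.symm i0 := fun h => hi (by simpa using congrArg e h)
      have := sortDesc_penult_le_of_min f hN hmin hne
      simpa [hf] using this
    have hcx0 : ecoeffs hM x i0 = 0 := by
      have hexp := dot_pair_expand hM u x
      rw [hox] at hexp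
      have hsingle : ∑ i, ecoeffs hM u i * ecoeffs hM x i
          = ecoeffs hM u i0 * ecoeffs hM x i0 := by
        refine Finset.sum_eq_single i0 ?_ ?_
        · intro b _ hb; rw [hone b hb, zero_mul]
        · intro h; exact absurd (Finset.mem_univ i0) h
      rw [hsingle] at hexp
      rcases mul_eq_zero.mp hexp.symm with h | h
      · exact absurd h hi0
      · exact h
    rw [dot_mulVec_expand hM, dot_self_expand hM, Finset.mul_sum]
    refine Finset.sum_le_sum fun i _ => ?_
    by_cases hi : i = i0
    · subst hi; rw [hcx0]; simp
    · exact mul_le_mul_of_nonneg_right (hP2 i hi) (sq_nonneg _)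
  · -- at least two nonzero coefficients
    push_neg at hone
    obtain ⟨i1, hi1ne, hi1⟩ := hone
    have hνle : ν ≤ 0 := by
      have hne : e.symm i1 ≠ e.symm i0 := fun h => hi1ne (by simpa using congrArg e h)
      have hp := sortDesc_penult_le_pair f hN hne
      have h1 : f (e.symm i1) = 0 := by
        simp only [hf, Equiv.apply_symm_apply]; exact hzero i1 hi1
      have h0 : f (e.symm i0) = 0 := by
        simp only [hf, Equiv.apply_symm_apply]; exact hzero i0 hi0
      rw [h1, h0] at hp; simpa using hp
    have hxx : 0 ≤ x ⬝ᵥ x := by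
      rw [dot_self_expand hM]
      exact Finset.sum_nonneg fun i _ => sq_nonneg _
    have hqx := hq x
    have h6 : ν * (x ⬝ᵥ x) ≤ 0 := mul_nonpos_iff.mpr (Or.inr ⟨hνle, hxx⟩)
    linarith

lemma exists_orth_unit_quad_le {N : ℕ} (hN : 2 ≤ N) (e : Fin N ≃ W) (hM : M.IsHermitian)
    (hq : ∀ y : W → ℝ, 0 ≤ y ⬝ᵥ (M *ᵥ y)) {u : W → ℝ} (hu0 : u ≠ 0) (hu : M *ᵥ u = 0) :
    ∃ x : W → ℝ, u ⬝ᵥ x = 0 ∧ x ⬝ᵥ x = 1 ∧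
      x ⬝ᵥ (M *ᵥ x) ≤ sortDesc (fun k => hM.eigenvalues (e k)) ⟨N - 2, by omega⟩ := by
  have hnn : ∀ i, 0 ≤ hM.eigenvalues i := eigenvalues_nonneg_of_quad hM hq
  obtain ⟨hzero, i0, hi0⟩ := kernel_ecoeffs hM hq hu0 hu
  set f := fun k => hM.eigenvalues (e k) with hf
  set ν := sortDesc f ⟨N - 2, by omega⟩ with hν
  have hν0 : 0 ≤ ν := by
    obtain ⟨k, hk⟩ := sortDesc_penult_mem f hN
    rw [hν, hk]; exact hnn _
  by_cases hone : ∀ j, j ≠ i0 → ecoeffs hM u j = 0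
  · -- unique nonzero coefficient: use an eigenvector avoiding i0
    obtain ⟨j', hj'ne, hj'le⟩ := exists_ne_le_sortDesc_penult f hN (e.symm i0)
    refine ⟨evec hM (e j'), ?_, evec_norm hM _, ?_⟩
    · rw [dot_evec]
      refine hone _ fun h => hj'ne ?_
      rw [← h]; simp
    · rw [evec_quad hM]
      exact hj'le
  · -- two nonzero coefficients: combination of two kernel eigenvectors
    push_neg at hone
    obtain ⟨i1, hi1ne, hi1⟩ := hone
    set a := ecoeffs hM u i0 with ha
    set b := ecoeffs hM u i1 with hb
    have hs : 0 < a ^ 2 + b ^ 2 := by positivity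
    set s := a ^ 2 + b ^ 2 with hsdef
    set y : W → ℝ := a • evec hM i1 - b • evec hM i0 with hy
    have h01 : evec hM i1 ⬝ᵥ evec hM i0 = 0 := by
      rw [evec_dotp hM]; simp [hi1ne]
    have h10 : evec hM i0 ⬝ᵥ evec hM i1 = 0 := by
      rw [evec_dotp hM]; simp [Ne.symm hi1ne]
    have hyy : y ⬝ᵥ y = s := by
      simp only [hy, sub_dotProduct, dotProduct_sub, smul_dotProduct,
        dotProduct_smul, evec_norm hM, h01, h10, smul_eq_mul, mul_one, mul_zero,
        sub_zero, zero_sub, sub_neg_eq_add]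
      rw [hsdef]; ring
    have hMy : M *ᵥ y = 0 := by
      rw [hy, Matrix.mulVec_sub, Matrix.mulVec_smul, Matrix.mulVec_smul]
      have h1 : M *ᵥ evec hM i1 = hM.eigenvalues i1 • evec hM i1 :=
        hM.mulVec_eigenvectorBasis i1
      have h0 : M *ᵥ evec hM i0 = hM.eigenvalues i0 • evec hM i0 :=
        hM.mulVec_eigenvectorBasis i0
      rw [h1, h0, hzero i1 hi1, hzero i0 hi0]
      simp
    have huy : u ⬝ᵥ y = 0 := by
      rw [hy, dotProduct_sub, dotProduct_smul, dotProduct_smul,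
        dot_evec hM, dot_evec hM, ← ha, ← hb]
      simp [smul_eq_mul]; ring
    set c := (Real.sqrt s)⁻¹ with hc
    have hcs : c ^ 2 * s = 1 := by
      rw [hc, inv_pow, Real.sq_sqrt hs.le]
      field_simp
    refine ⟨c • y, ?_, ?_, ?_⟩
    · rw [dotProduct_smul, huy, smul_zero]
    · rw [smul_dotProduct, dotProduct_smul, hyy, smul_eq_mul, smul_eq_mul,
        ← mul_assoc, ← sq, hcs]
    · rw [Matrix.mulVec_smul, dotProduct_smul, smul_dotProduct, hMy]
      simpa using hν0

end Var

section GraphFacts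
variable {V : Type*} [Fintype V] [DecidableEq V]

lemma intAdj_entry_nonneg (E A : V → V → ℕ) (i j : V ⊕ V) : 0 ≤ intAdj E A i j := by
  rcases i with u | u <;> rcases j with v | v <;>
    simp only [intAdj, Matrix.fromBlocks_apply₁₁, Matrix.fromBlocks_apply₁₂,
      Matrix.fromBlocks_apply₂₁, Matrix.fromBlocks_apply₂₂, Matrix.transpose_apply,
      Au, Bm, Matrix.of_apply] <;> [skip; positivity; positivity; skip] <;>
    · split_ifs <;> positivity

lemma intLap_symm (E A : V → V → ℕ) (hE : ∀ u v, E u v = E v u) (i j : V ⊕ V) :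
    intLap E A i j = intLap E A j i := by
  have h := intLap_isHermitian E A hE
  have h2 := congrFun (congrFun (h : (intLap E A)ᴴ = intLap E A) i) j
  rw [Matrix.conjTranspose_apply] at h2
  simpa using h2.symm

lemma intLap_offdiag (E A : V → V → ℕ) (i j : V ⊕ V) (h : i ≠ j) :
    intLap E A i j ≤ 0 := by
  have hd : intDeg E A i j = 0 := Matrix.diagonal_apply_ne _ h
  have := intAdj_entry_nonneg E A i j
  simp only [intLap, Matrix.sub_apply, hd, zero_sub]
  linarith

lemma auRow (E : V → V → ℕ) (v : V) : ∑ u, Au E v u = ((dU E v : ℕ) : ℝ) := by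
  have hentry : ∀ u, Au E v u = if u = v then ((2 * E v v : ℕ) : ℝ) else ((E v u : ℕ) : ℝ) := by
    intro u
    by_cases h : u = v
    · subst h; simp [Au]
    · simp [Au, h, Ne.symm h]
  simp_rw [hentry]
  rw [Finset.sum_ite, Finset.filter_eq' Finset.univ v]
  simp only [Finset.mem_univ, if_true, Finset.sum_const, Finset.card_singleton, one_smul]
  rw [dU]
  push_cast
  rw [add_comm]

lemma bmRow (A : V → V → ℕ) (v : V) : ∑ u, Bm A v u = ((dOut A v : ℕ) : ℝ) := by
  simp [Bm, dOut]

lemma bmCol (A : V → V → ℕ) (v : V) : ∑ u, Bm A u v = ((dIn A v : ℕ) : ℝ) := by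
  simp [Bm, dIn]

lemma intLap_rowsum (E A : V → V → ℕ) (i : V ⊕ V) : ∑ j, intLap E A i j = 0 := by
  have hdeg : ∑ j, intDeg E A i j
      = Sum.elim (fun v => ((dU E v + dOut A v : ℕ) : ℝ))
        (fun v => ((dU E v + dIn A v : ℕ) : ℝ)) i := by
    simp [intDeg, Matrix.diagonal_apply, Finset.sum_ite_eq' Finset.univ i]
  have hadj : ∑ j, intAdj E A i j
      = Sum.elim (fun v => ((dU E v + dOut A v : ℕ) : ℝ))
        (fun v => ((dU E v + dIn A v : ℕ) : ℝ)) i := by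
    rcases i with v | v
    · rw [Fintype.sum_sum_type]
      simp only [intAdj, Matrix.fromBlocks_apply₁₁, Matrix.fromBlocks_apply₁₂]
      rw [auRow E v, bmRow A v]
      push_cast; simp
    · rw [Fintype.sum_sum_type]
      simp only [intAdj, Matrix.fromBlocks_apply₂₁, Matrix.fromBlocks_apply₂₂,
        Matrix.transpose_apply]
      rw [auRow E v, bmCol A v]
      push_cast; simp [add_comm]
  simp only [intLap, Matrix.sub_apply, Finset.sum_sub_distrib, hdeg, hadj, sub_self]

lemma intLap_mulVec_ones (E A : V → V → ℕ) :
    intLap E A *ᵥ (fun _ => (1 : ℝ)) = 0 := by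
  funext i
  simp only [Matrix.mulVec, dotProduct, mul_one, Pi.zero_apply]
  exact intLap_rowsum E A i

lemma intAdj_add (E A E₁ A₁ E₂ A₂ : V → V → ℕ)
    (hEsum : ∀ u v, E u v = E₁ u v + E₂ u v) (hAsum : ∀ u v, A u v = A₁ u v + A₂ u v) :
    intAdj E A = intAdj E₁ A₁ + intAdj E₂ A₂ := by
  have hAu : Au E = Au E₁ + Au E₂ := by
    ext u v
    by_cases h : u = v
    · subst h; simp only [Au, Matrix.add_apply, Matrix.of_apply, if_true, hEsum]
      push_cast; ring
    · simp only [Au, Matrix.add_apply, Matrix.of_apply, if_neg h, hEsum]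
      push_cast; ring
  have hBm : Bm A = Bm A₁ + Bm A₂ := by
    ext u v
    simp only [Bm, Matrix.add_apply, Matrix.of_apply, hAsum]
    push_cast; ring
  rw [intAdj, intAdj, intAdj, hAu, hBm, Matrix.transpose_add, Matrix.fromBlocks_add]

lemma dU_add (E E₁ E₂ : V → V → ℕ) (hEsum : ∀ u v, E u v = E₁ u v + E₂ u v) (v : V) :
    dU E v = dU E₁ v + dU E₂ v := by
  simp only [dU, hEsum, Finset.sum_add_distrib]; ring

lemma intDeg_add (E A E₁ A₁ E₂ A₂ : V → V → ℕ)
    (hEsum : ∀ u v, E u v = E₁ u v + E₂ u v) (hAsum : ∀ u v, A u v = A₁ u v + A₂ u v) :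
    intDeg E A = intDeg E₁ A₁ + intDeg E₂ A₂ := by
  have hfun : (Sum.elim (fun v => ((dU E v + dOut A v : ℕ) : ℝ))
        (fun v => ((dU E v + dIn A v : ℕ) : ℝ)))
      = fun i => (Sum.elim (fun v => ((dU E₁ v + dOut A₁ v : ℕ) : ℝ))
          (fun v => ((dU E₁ v + dIn A₁ v : ℕ) : ℝ)) i)
        + (Sum.elim (fun v => ((dU E₂ v + dOut A₂ v : ℕ) : ℝ))
          (fun v => ((dU E₂ v + dIn A₂ v : ℕ) : ℝ)) i) := by
    funext i
    rcases i with v | v <;>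
      · simp only [Sum.elim_inl, Sum.elim_inr, dOut, dIn, dU_add E E₁ E₂ hEsum, hAsum,
          Finset.sum_add_distrib]
        push_cast
        ring
  rw [intDeg, intDeg, intDeg, hfun, Matrix.diagonal_add]

lemma intLap_add (E A E₁ A₁ E₂ A₂ : V → V → ℕ)
    (hEsum : ∀ u v, E u v = E₁ u v + E₂ u v) (hAsum : ∀ u v, A u v = A₁ u v + A₂ u v) :
    intLap E A = intLap E₁ A₁ + intLap E₂ A₂ := by
  rw [intLap, intLap, intLap, intDeg_add E A E₁ A₁ E₂ A₂ hEsum hAsum,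
    intAdj_add E A E₁ A₁ E₂ A₂ hEsum hAsum]
  abel

lemma intLap_quad_nonneg (E A : V → V → ℕ) (hE : ∀ u v, E u v = E v u) (x : V ⊕ V → ℝ) :
    0 ≤ x ⬝ᵥ (intLap E A *ᵥ x) :=
  quad_nonneg_of_lap _ (intLap_symm E A hE) (intLap_offdiag E A) (intLap_rowsum E A) x

end GraphFacts
/-- if `G = G₁ ⊕ G₂` is a factorization of a simple mixed graph then
(i) `ν_{2n−1}(G) ≥ ν_{2n−1}(G₁) + ν_{2n−1}(G₂)` and
(ii) `max{ν₁(G₁), ν₁(G₂)} ≤ ν₁(G) ≤ ν₁(G₁) + ν₁(G₂)`. -/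
theorem stmt11 (n : ℕ) (hn : 0 < n) (E A E₁ A₁ E₂ A₂ : Fin n → Fin n → ℕ)
    (hE : ∀ u v, E u v = E v u) (hE₁ : ∀ u v, E₁ u v = E₁ v u) (hE₂ : ∀ u v, E₂ u v = E₂ v u)
    (hS : IsSimple E A) (hS₁ : IsSimple E₁ A₁) (hS₂ : IsSimple E₂ A₂)
    (hEsum : ∀ u v, E u v = E₁ u v + E₂ u v) (hAsum : ∀ u v, A u v = A₁ u v + A₂ u v) :
    (nuT E₁ A₁ hE₁ ⟨n + n - 2, by omega⟩ + nuT E₂ A₂ hE₂ ⟨n + n - 2, by omega⟩ ≤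
        nuT E A hE ⟨n + n - 2, by omega⟩) ∧
    (max (nuT E₁ A₁ hE₁ ⟨0, by omega⟩) (nuT E₂ A₂ hE₂ ⟨0, by omega⟩) ≤
        nuT E A hE ⟨0, by omega⟩) ∧
    (nuT E A hE ⟨0, by omega⟩ ≤
        nuT E₁ A₁ hE₁ ⟨0, by omega⟩ + nuT E₂ A₂ hE₂ ⟨0, by omega⟩) := by
  have hN : 2 ≤ n + n := by omega
  have hN0 : 0 < n + n := by omega
  set e : Fin (n + n) ≃ Fin n ⊕ Fin n := finSumFinEquiv.symm with he
  have hL := intLap_isHermitian E A hE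
  have hL1 := intLap_isHermitian E₁ A₁ hE₁
  have hL2 := intLap_isHermitian E₂ A₂ hE₂
  set f : Fin (n + n) → ℝ := fun k => hL.eigenvalues (e k) with hfdef
  set f1 : Fin (n + n) → ℝ := fun k => hL1.eigenvalues (e k) with hf1def
  set f2 : Fin (n + n) → ℝ := fun k => hL2.eigenvalues (e k) with hf2def
  have hq : ∀ x, 0 ≤ x ⬝ᵥ (intLap E A *ᵥ x) := intLap_quad_nonneg E A hE
  have hq1 : ∀ x, 0 ≤ x ⬝ᵥ (intLap E₁ A₁ *ᵥ x) := intLap_quad_nonneg E₁ A₁ hE₁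
  have hq2 : ∀ x, 0 ≤ x ⬝ᵥ (intLap E₂ A₂ *ᵥ x) := intLap_quad_nonneg E₂ A₂ hE₂
  have hadd : intLap E A = intLap E₁ A₁ + intLap E₂ A₂ :=
    intLap_add E A E₁ A₁ E₂ A₂ hEsum hAsum
  have hsplit : ∀ x : Fin n ⊕ Fin n → ℝ, x ⬝ᵥ (intLap E A *ᵥ x)
      = x ⬝ᵥ (intLap E₁ A₁ *ᵥ x) + x ⬝ᵥ (intLap E₂ A₂ *ᵥ x) := by
    intro x
    rw [hadd, Matrix.add_mulVec, dotProduct_add]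
  set u : Fin n ⊕ Fin n → ℝ := fun _ => 1 with hudef
  have hu0 : u ≠ 0 := by
    intro h
    have := congrFun h (Sum.inl ⟨0, hn⟩)
    simp [hudef] at this
  have hker : intLap E A *ᵥ u = 0 := intLap_mulVec_ones E A
  have hker1 : intLap E₁ A₁ *ᵥ u = 0 := intLap_mulVec_ones E₁ A₁
  have hker2 : intLap E₂ A₂ *ᵥ u = 0 := intLap_mulVec_ones E₂ A₂
  have en : nuT E A hE ⟨n + n - 2, by omega⟩ = sortDesc f ⟨n + n - 2, by omega⟩ := rfl
  have en1 : nuT E₁ A₁ hE₁ ⟨n + n - 2, by omega⟩ = sortDesc f1 ⟨n + n - 2, by omega⟩ := rfl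
  have en2 : nuT E₂ A₂ hE₂ ⟨n + n - 2, by omega⟩ = sortDesc f2 ⟨n + n - 2, by omega⟩ := rfl
  have e0 : nuT E A hE ⟨0, by omega⟩ = sortDesc f ⟨0, hN0⟩ := rfl
  have e01 : nuT E₁ A₁ hE₁ ⟨0, by omega⟩ = sortDesc f1 ⟨0, hN0⟩ := rfl
  have e02 : nuT E₂ A₂ hE₂ ⟨0, by omega⟩ = sortDesc f2 ⟨0, hN0⟩ := rfl
  have hub : ∀ i, hL.eigenvalues i ≤ sortDesc f ⟨0, hN0⟩ := by
    intro i
    have := le_sortDesc_zero f hN0 (e.symm i)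
    simpa [hfdef] using this
  have hub1 : ∀ i, hL1.eigenvalues i ≤ sortDesc f1 ⟨0, hN0⟩ := by
    intro i
    have := le_sortDesc_zero f1 hN0 (e.symm i)
    simpa [hf1def] using this
  have hub2 : ∀ i, hL2.eigenvalues i ≤ sortDesc f2 ⟨0, hN0⟩ := by
    intro i
    have := le_sortDesc_zero f2 hN0 (e.symm i)
    simpa [hf2def] using this
  refine ⟨?_, ?_, ?_⟩
  · -- (i) superadditivity of the second-smallest eigenvalue
    rw [en, en1, en2]
    obtain ⟨x, hox, hxx, hxq⟩ := exists_orth_unit_quad_le hN e hL hq hu0 hker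
    have h1 := quad_ge_nu2 hN e hL1 hq1 hu0 hker1 hox
    have h2 := quad_ge_nu2 hN e hL2 hq2 hu0 hker2 hox
    rw [hxx, mul_one] at h1 h2
    have := hsplit x
    linarith
  · -- (ii) lower bound for the largest eigenvalue
    rw [e0, e01, e02]
    refine max_le ?_ ?_
    · obtain ⟨k, hk⟩ := sortDesc_zero_mem f1 hN0
      set x := evec hL1 (e k) with hx
      have hx1 : x ⬝ᵥ (intLap E₁ A₁ *ᵥ x) = hL1.eigenvalues (e k) := evec_quad hL1 (e k)
      have hx2 : 0 ≤ x ⬝ᵥ (intLap E₂ A₂ *ᵥ x) := hq2 x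
      have hxn : x ⬝ᵥ x = 1 := evec_norm hL1 (e k)
      have h3 : x ⬝ᵥ (intLap E A *ᵥ x) ≤ sortDesc f ⟨0, hN0⟩ * (x ⬝ᵥ x) :=
        quad_le_of_ub hL hub x
      rw [hxn, mul_one] at h3
      have h4 := hsplit x
      have hk' : sortDesc f1 ⟨0, hN0⟩ = hL1.eigenvalues (e k) := hk
      linarith
    · obtain ⟨k, hk⟩ := sortDesc_zero_mem f2 hN0
      set x := evec hL2 (e k) with hx
      have hx1 : x ⬝ᵥ (intLap E₂ A₂ *ᵥ x) = hL2.eigenvalues (e k) := evec_quad hL2 (e k)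
      have hx2 : 0 ≤ x ⬝ᵥ (intLap E₁ A₁ *ᵥ x) := hq1 x
      have hxn : x ⬝ᵥ x = 1 := evec_norm hL2 (e k)
      have h3 : x ⬝ᵥ (intLap E A *ᵥ x) ≤ sortDesc f ⟨0, hN0⟩ * (x ⬝ᵥ x) :=
        quad_le_of_ub hL hub x
      rw [hxn, mul_one] at h3
      have h4 := hsplit x
      have hk' : sortDesc f2 ⟨0, hN0⟩ = hL2.eigenvalues (e k) := hk
      linarith
  · -- (ii) subadditivity of the largest eigenvalue
    rw [e0, e01, e02]
    obtain ⟨k, hk⟩ := sortDesc_zero_mem f hN0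
    set x := evec hL (e k) with hx
    have hx1 : x ⬝ᵥ (intLap E A *ᵥ x) = hL.eigenvalues (e k) := evec_quad hL (e k)
    have hxn : x ⬝ᵥ x = 1 := evec_norm hL (e k)
    have h3 : x ⬝ᵥ (intLap E₁ A₁ *ᵥ x) ≤ sortDesc f1 ⟨0, hN0⟩ * (x ⬝ᵥ x) :=
      quad_le_of_ub hL1 hub1 x
    have h4 : x ⬝ᵥ (intLap E₂ A₂ *ᵥ x) ≤ sortDesc f2 ⟨0, hN0⟩ * (x ⬝ᵥ x) :=
      quad_le_of_ub hL2 hub2 x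
    rw [hxn, mul_one] at h3 h4
    have h5 := hsplit x
    have hk' : sortDesc f ⟨0, hN0⟩ = hL.eigenvalues (e k) := hk
    linarith
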